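/- arXiv:1204.3309 — 3 statements merged into one kernel-verified Lean document; each statement's English description precedes it below -/
import Mathlib

section
/- Let G = (V,E) be a finite graph with vertex valence bounded by K, let p > 0, and let Γ be a family of edge-paths in G. Suppose τ:V→ℝ₊ satisfies Σ_{i=1}^{N-1} τ(z_i) ≥ 1 for every path γ = {(z_i,z_{i+1})}_{i=1}^{N-1} ∈ Γ. Then there exists τ̃:V→ℝ₊ such that (a) Σ_{i=1}^{N-1} min(τ̃*(z_i), τ̃*(z_{i+1})) ≥ 1 for every γ ∈ Γ, where τ̃*(x) = min{τ̃(y) : y adjacent to x or y = x}, and (b) Σ_{v∈V} τ̃(v)^p ≤ 2^p K² Σ_{v∈V} τ(v)^p. -/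
/-- `starF Adj τ x` is the minimum of `τ` over the closed neighborhood of `x`
(neighbors of `x` together with `x` itself). -/
noncomputable def starF {V : Type*} (Adj : V → V → Prop) (τ : V → ℝ) (x : V) : ℝ :=
  sInf {r : ℝ | ∃ y, (Adj x y ∨ y = x) ∧ r = τ y}

/-- Let `G` be a finite graph with valence (counting the vertex itself)
bounded by `K`, `p > 0`, and `Γ` a family of edge-paths of `G`. If `τ : V → ℝ₊` satisfies
`Σ_{i=1}^{N-1} τ(z_i) ≥ 1` along every path of `Γ`, then there is `τ̃ : V → ℝ₊` with
`Σ min(τ̃*(z_i), τ̃*(z_{i+1})) ≥ 1` along every path of `Γ` and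
`Σ_v τ̃(v)^p ≤ 2^p K² Σ_v τ(v)^p`. -/
theorem stmt_9 {V : Type*} [Fintype V] (Adj : V → V → Prop) (hsymm : Symmetric Adj)
    (K : ℕ) (hval : ∀ v : V, {w | Adj v w ∨ w = v}.ncard ≤ K)
    (p : ℝ) (hp : 0 < p)
    (Γ : Set (List V)) (hpath : ∀ γ ∈ Γ, γ.Chain' Adj)
    (τ : V → ℝ) (hτ : ∀ v, 0 ≤ τ v)
    (hadm : ∀ γ ∈ Γ, 1 ≤ (γ.dropLast.map τ).sum) :
    ∃ τt : V → ℝ, (∀ v, 0 ≤ τt v) ∧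
      (∀ γ ∈ Γ, 1 ≤ ((γ.zip γ.tail).map
        (fun q => min (starF Adj τt q.1) (starF Adj τt q.2))).sum) ∧
      (∑ v, τt v ^ p) ≤ 2 ^ p * (K : ℝ) ^ 2 * ∑ v, τ v ^ p := by
  classical
  -- R x y : y is within distance 2 of x
  set R : V → V → Prop := fun x y => ∃ w, (Adj x w ∨ w = x) ∧ (Adj w y ∨ y = w) with hR
  have hRsymm : ∀ x y, R x y → R y x := by
    rintro x y ⟨w, h1, h2⟩
    refine ⟨w, ?_, ?_⟩
    · rcases h2 with h | h
      · exact Or.inl (hsymm h)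
      · exact Or.inr h.symm
    · rcases h1 with h | h
      · exact Or.inl (hsymm h)
      · exact Or.inr h.symm
  set S : V → Finset V := fun x => Finset.univ.filter (fun y => R x y) with hS
  have hmemS : ∀ x y, y ∈ S x ↔ R x y := by
    intro x y; simp [hS]
  have hxS : ∀ x, x ∈ S x := by
    intro x
    exact (hmemS x x).2 ⟨x, Or.inr rfl, Or.inr rfl⟩
  have hSne : ∀ x, (S x).Nonempty := fun x => ⟨x, hxS x⟩
  set τt : V → ℝ := fun x => (S x).sup' (hSne x) τ with hτt
  have hle : ∀ x y, R x y → τ y ≤ τt x := by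
    intro x y h
    exact Finset.le_sup' τ ((hmemS x y).2 h)
  have hτtn : ∀ x, 0 ≤ τt x := fun x =>
    le_trans (hτ x) (Finset.le_sup' τ (hxS x))
  -- lower bound on starF
  have hstar : ∀ z z', (∀ y, (Adj z' y ∨ y = z') → R y z) → τ z ≤ starF Adj τt z' := by
    intro z z' h
    refine le_csInf ⟨τt z', z', Or.inr rfl, rfl⟩ ?_
    rintro r ⟨y, hy, rfl⟩
    exact hle y z (h y hy)
  have hstar2 : ∀ z z', Adj z z' → τ z ≤ min (starF Adj τt z) (starF Adj τt z') := by
    intro z z' hzz'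
    refine le_min (hstar z z ?_) (hstar z z' ?_)
    · rintro y (hy | rfl)
      · exact ⟨z, Or.inl (hsymm hy), Or.inr rfl⟩
      · exact ⟨y, Or.inr rfl, Or.inr rfl⟩
    · rintro y (hy | rfl)
      · exact ⟨z', Or.inl (hsymm hy), Or.inl (hsymm hzz')⟩
      · exact ⟨y, Or.inr rfl, Or.inl (hsymm hzz')⟩
  refine ⟨τt, hτtn, ?_, ?_⟩
  · intro γ hγ
    refine le_trans (hadm γ hγ) ?_
    have hc := hpath γ hγ
    clear hγ hadm hpath
    induction γ with
    | nil => simp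
    | cons a l ih =>
      cases l with
      | nil => simp
      | cons b l' =>
        rw [List.Chain', List.isChain_cons_cons] at hc
        have := ih hc.2
        simp only [List.tail_cons, List.zip_cons_cons, List.map_cons, List.sum_cons,
          List.dropLast_cons₂] at this ⊢
        exact add_le_add (hstar2 a b hc.1) this
  · -- the counting estimate
    have hchoice := fun x => Finset.exists_mem_eq_sup' (hSne x) τ
    choose y hy1 hy2 using hchoice
    have hyR : ∀ x, R x (y x) := fun x => (hmemS x (y x)).1 (hy1 x)
    -- closed neighborhoods as finsets
    set N : V → Finset V := fun v => Finset.univ.filter (fun w => Adj v w ∨ w = v) with hN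
    have hNcard : ∀ v, (N v).card ≤ K := by
      intro v
      have := hval v
      rwa [Set.ncard_eq_toFinset_card', Set.toFinset_setOf] at this
    have hTcard : ∀ b : V, (Finset.univ.filter (fun x => R b x)).card ≤ K ^ 2 := by
      intro b
      have hsub : Finset.univ.filter (fun x => R b x) ⊆ (N b).biUnion N := by
        intro x hx
        rw [Finset.mem_filter] at hx
        obtain ⟨w, h1, h2⟩ := hx.2
        refine Finset.mem_biUnion.2 ⟨w, ?_, ?_⟩ <;> simp [hN, h1, h2]
      calc (Finset.univ.filter (fun x => R b x)).card
          ≤ ((N b).biUnion N).card := Finset.card_le_card hsub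
        _ ≤ ∑ w ∈ N b, (N w).card := Finset.card_biUnion_le
        _ ≤ ∑ _w ∈ N b, K := Finset.sum_le_sum (fun w _ => hNcard w)
        _ = (N b).card * K := by rw [Finset.sum_const, smul_eq_mul]
        _ ≤ K * K := Nat.mul_le_mul_right K (hNcard b)
        _ = K ^ 2 := (sq K).symm
    have step1 : (∑ v, τt v ^ p) = ∑ v, τ (y v) ^ p := by
      refine Finset.sum_congr rfl (fun v _ => ?_)
      exact congrArg (· ^ p) (hy2 v)
    have step2 : (∑ v, τ (y v) ^ p) ≤ (K : ℝ) ^ 2 * ∑ v, τ v ^ p := by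
      rw [Finset.sum_comp (fun v => τ v ^ p) y]
      have hterm : ∀ b : V,
          (Finset.univ.filter (fun x => y x = b)).card • τ b ^ p ≤ (K : ℝ)^2 * τ b ^ p := by
        intro b
        rw [nsmul_eq_mul]
        refine mul_le_mul_of_nonneg_right ?_ (Real.rpow_nonneg (hτ b) p)
        have hsub : Finset.univ.filter (fun x => y x = b) ⊆
            Finset.univ.filter (fun x => R b x) := by
          intro x hx
          rw [Finset.mem_filter] at hx ⊢
          exact ⟨hx.1, hx.2 ▸ hRsymm x (y x) (hyR x)⟩
        have := le_trans (Finset.card_le_card hsub) (hTcard b)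
        calc ((Finset.univ.filter (fun x => y x = b)).card : ℝ) ≤ ((K^2 : ℕ) : ℝ) := by
              exact_mod_cast this
          _ = (K : ℝ)^2 := by push_cast; ring
      calc ∑ b ∈ Finset.univ.image y, (Finset.univ.filter (fun x => y x = b)).card • τ b ^ p
          ≤ ∑ b ∈ Finset.univ.image y, (K : ℝ)^2 * τ b ^ p :=
            Finset.sum_le_sum (fun b _ => hterm b)
        _ ≤ ∑ b, (K : ℝ)^2 * τ b ^ p := by
            refine Finset.sum_le_sum_of_subset_of_nonneg (Finset.subset_univ _) ?_
            intro b _ _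
            exact mul_nonneg (by positivity) (Real.rpow_nonneg (hτ b) p)
        _ = (K : ℝ)^2 * ∑ v, τ v ^ p := by rw [Finset.mul_sum]
    have h2p : (1 : ℝ) ≤ 2 ^ p := Real.one_le_rpow one_le_two hp.le
    calc (∑ v, τt v ^ p) ≤ (K : ℝ) ^ 2 * ∑ v, τ v ^ p := step1 ▸ step2
      _ = 1 * ((K : ℝ) ^ 2 * ∑ v, τ v ^ p) := (one_mul _).symm
      _ ≤ 2 ^ p * ((K : ℝ) ^ 2 * ∑ v, τ v ^ p) := by
          refine mul_le_mul_of_nonneg_right h2p ?_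
          exact mul_nonneg (by positivity) (Finset.sum_nonneg fun v _ => Real.rpow_nonneg (hτ v) p)
      _ = 2 ^ p * (K : ℝ) ^ 2 * ∑ v, τ v ^ p := by ring
end

section
/- Let X be a compact metric space admitting an Ahlfors regular distance of dimension α in its conformal gauge (so 𝒥_AR(X,d) ≠ ∅). Suppose additionally X is uniformly disconnected: there is C ≥ 1 such that for every x ∈ X and r > 0 there is a set A with B(x,r/C) ⊆ A ⊆ B(x,r) and dist(A, X∖A) ≥ r/C. Then for every p > 0 and every sufficiently large relative scale k, the path families Γ_{k,2}(B) in the nerves are empty for all B ∈ 𝒰; consequently M_p(2) = 0 for all p > 0 and the critical exponent Q_N = 0. -/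
open scoped ENNReal

/-- The `p`-combinatorial modulus of a family `Γ` of paths (lists of vertices), where
vertices at scale `m` are the elements of `centers m`. -/
noncomputable def nerveMod {X : Type*} [MetricSpace X]
    (centers : ℕ → Finset X) (m : ℕ) (p : ℝ) (Γ : Set (List X)) : ℝ≥0∞ :=
  sInf {v : ℝ≥0∞ | ∃ ρ : X → ℝ≥0∞,
    (∀ γ ∈ Γ, 1 ≤ (γ.map ρ).sum) ∧ v = ∑ z ∈ centers m, ρ z ^ p}

/-- `Γ_{k,L}(B)`: nerve paths at scale `|B| + k = i + k` from `B = B(x, κ b^{-i})`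
to the complement of `L·B`. -/
def nervePaths {X : Type*} [MetricSpace X] (centers : ℕ → Finset X)
    (Adj : ℕ → X → X → Prop) (κ b : ℝ) (i : ℕ) (x : X) (k : ℕ) (L : ℝ) :
    Set (List X) :=
  {γ : List X | γ ≠ [] ∧ γ.Chain' (Adj (i + k)) ∧ (∀ z ∈ γ, z ∈ centers (i + k)) ∧
    (∃ z₁, γ.head? = some z₁ ∧ z₁ ∈ Metric.ball x (κ * (b ^ i)⁻¹)) ∧
    (∃ zN, γ.getLast? = some zN ∧ zN ∉ Metric.ball x (L * κ * (b ^ i)⁻¹))}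

/-- `M_{p,k}(L)`: supremum over all `B ∈ 𝒰` of the modulus of `Γ_{k,L}(B)`. -/
noncomputable def Mpk {X : Type*} [MetricSpace X] (centers : ℕ → Finset X)
    (Adj : ℕ → X → X → Prop) (κ b : ℝ) (p : ℝ) (k : ℕ) (L : ℝ) : ℝ≥0∞ :=
  ⨆ (i : ℕ) (x : X) (_ : x ∈ centers i),
    nerveMod centers (i + k) p (nervePaths centers Adj κ b i x k L)


lemma chain_cross {X : Type*} (R : X → X → Prop) (A : Set X) :
    ∀ γ : List X, γ.Chain' R →
    (∃ z₁, γ.head? = some z₁ ∧ z₁ ∈ A) →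
    (∃ zN, γ.getLast? = some zN ∧ zN ∉ A) →
    ∃ a ∈ A, ∃ w, w ∉ A ∧ R a w
  | [] => by simp
  | [z] => by
      rintro _ ⟨z₁, hz₁, hz₁A⟩ ⟨zN, hzN, hzNA⟩
      simp only [List.head?_cons, List.getLast?_singleton, Option.some.injEq] at hz₁ hzN
      subst hz₁; subst hzN; exact absurd hz₁A hzNA
  | z :: w :: rest => by
      rintro hch ⟨z₁, hz₁, hz₁A⟩ ⟨zN, hzN, hzNA⟩
      simp only [List.head?_cons, Option.some.injEq] at hz₁
      subst hz₁
      by_cases hw : w ∈ A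
      · exact chain_cross R A (w :: rest) hch.tail ⟨w, rfl, hw⟩
          ⟨zN, by simpa [List.getLast?_cons_cons] using hzN, hzNA⟩
      · exact ⟨z, hz₁A, w, hw, (List.isChain_cons_cons.mp hch).1⟩

/-- Let `X` be a compact metric space whose AR conformal gauge is
nonempty (there is a distance `θ` on `X`, quasisymmetrically equivalent to `d`,
carrying an Ahlfors regular measure of dimension `α`), and suppose `X` is uniformly
disconnected with constant `C`. Then for every sufficiently large relative scale `k`
the path families `Γ_{k,2}(B)` of the nerves are empty for all `B ∈ 𝒰`; consequently
`M_p(2) = liminf_k M_{p,k}(2) = 0` for all `p > 0`, and the critical exponent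
`Q_N = inf{p > 0 : M_p(2) = 0}` is `0`. -/
theorem stmt_17 {X : Type*} [MetricSpace X] [CompactSpace X]
    [MeasurableSpace X] [BorelSpace X]
    -- the covering/nerve structure
    (centers : ℕ → Finset X) (Adj : ℕ → X → X → Prop)
    (κ b lam : ℝ) (hκ : 1 ≤ κ) (hb : 1 < b) (hlam : 1 ≤ lam)
    (hAdj : ∀ (m : ℕ) (x y : X), Adj m x y ↔ x ≠ y ∧
      (Metric.ball x (lam * κ * (b ^ m)⁻¹) ∩ Metric.ball y (lam * κ * (b ^ m)⁻¹)).Nonempty)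
    -- 𝒥_AR(X,d) ≠ ∅ : an Ahlfors regular distance θ of dimension α in the gauge
    (θ : X → X → ℝ) (α : ℝ) (hα : 0 < α)
    (hθ0 : ∀ x y, θ x y = 0 ↔ x = y) (hθs : ∀ x y, θ x y = θ y x)
    (hθt : ∀ x y z, θ x z ≤ θ x y + θ y z)
    (η : ℝ → ℝ) (hη : StrictMonoOn η (Set.Ici 0))
    (hqs : ∀ x y z : X, y ≠ z → θ x z / θ y z ≤ η (dist x z / dist y z))
    (μ : MeasureTheory.Measure X) (Kar : ℝ) (hKar : 1 ≤ Kar)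
    (hAR : ∀ (x : X) (r : ℝ), 0 < r → r ≤ sSup {t : ℝ | ∃ a b : X, t = θ a b} →
      ENNReal.ofReal (Kar⁻¹ * r ^ α) ≤ μ {y | θ x y < r} ∧
        μ {y | θ x y < r} ≤ ENNReal.ofReal (Kar * r ^ α))
    -- uniform disconnectedness
    (C : ℝ) (hC : 1 ≤ C)
    (hUD : ∀ (x : X) (r : ℝ), 0 < r → ∃ A : Set X,
      Metric.ball x (r / C) ⊆ A ∧ A ⊆ Metric.ball x r ∧
      ∀ a ∈ A, ∀ w ∉ A, r / C ≤ dist a w) :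
    (∃ k₀ : ℕ, ∀ k, k₀ ≤ k → ∀ i : ℕ, ∀ x ∈ centers i,
      nervePaths centers Adj κ b i x k 2 = ∅) ∧
    (∀ p : ℝ, 0 < p →
      Filter.liminf (fun k => Mpk centers Adj κ b p k 2) Filter.atTop = 0) ∧
    sInf {p : ℝ | 0 < p ∧
      Filter.liminf (fun k => Mpk centers Adj κ b p k 2) Filter.atTop = 0} = 0 := by
  have hb0 : (0:ℝ) < b := lt_trans one_pos hb
  have hκ0 : (0:ℝ) < κ := lt_of_lt_of_le one_pos hκ
  have hC0 : (0:ℝ) < C := lt_of_lt_of_le one_pos hC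
  have hlam0 : (0:ℝ) < lam := lt_of_lt_of_le one_pos hlam
  -- choose k₀ with 2*lam*C < b^k₀
  obtain ⟨k₀, hk₀⟩ : ∃ n : ℕ, 2 * lam * C < b ^ n := pow_unbounded_of_one_lt _ hb
  have hempty : ∀ k, k₀ ≤ k → ∀ i : ℕ, ∀ x ∈ centers i,
      nervePaths centers Adj κ b i x k 2 = ∅ := by
    intro k hk i x _
    ext γ
    simp only [Set.mem_empty_iff_false, iff_false]
    rintro ⟨hne, hch, hmem, ⟨z₁, hz₁, hz₁B⟩, ⟨zN, hzN, hzNB⟩⟩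
    have hbi : (0:ℝ) < b ^ i := pow_pos hb0 i
    have hbk : (0:ℝ) < b ^ k := pow_pos hb0 k
    have hr : (0:ℝ) < κ * (b ^ i)⁻¹ := mul_pos hκ0 (inv_pos.mpr hbi)
    obtain ⟨A, hA1, hA2, hA3⟩ := hUD z₁ (κ * (b ^ i)⁻¹) hr
    -- z₁ ∈ A
    have hz₁A : z₁ ∈ A := hA1 (by
      simp only [Metric.mem_ball, dist_self]
      exact div_pos hr hC0)
    -- A ⊆ ball x (2κ b⁻ⁱ)
    have hAsub : A ⊆ Metric.ball x (2 * κ * (b ^ i)⁻¹) := by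
      intro y hy
      have h1 : dist y z₁ < κ * (b ^ i)⁻¹ := Metric.mem_ball.mp (hA2 hy)
      have h2 : dist z₁ x < κ * (b ^ i)⁻¹ := Metric.mem_ball.mp hz₁B
      have := dist_triangle y z₁ x
      rw [Metric.mem_ball]
      nlinarith
    have hzNA : zN ∉ A := fun h => hzNB (hAsub h)
    obtain ⟨a, haA, w, hwA, haw⟩ :=
      chain_cross (Adj (i + k)) A γ hch ⟨z₁, hz₁, hz₁A⟩ ⟨zN, hzN, hzNA⟩
    -- adjacency gives a small distance
    obtain ⟨-, y, hy1, hy2⟩ := (hAdj (i + k) a w).mp haw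
    have hy1' : dist y a < lam * κ * (b ^ (i + k))⁻¹ := Metric.mem_ball.mp hy1
    have hy2' : dist y w < lam * κ * (b ^ (i + k))⁻¹ := Metric.mem_ball.mp hy2
    have hdaw : dist a w < 2 * (lam * κ * (b ^ (i + k))⁻¹) := by
      have := dist_triangle a y w
      rw [dist_comm a y] at this
      linarith
    have hgap : κ * (b ^ i)⁻¹ / C ≤ dist a w := hA3 a haA w hwA
    -- arithmetic contradiction
    have hbk' : 2 * lam * C < b ^ k := lt_of_lt_of_le hk₀ (pow_le_pow_right₀ (le_of_lt hb) hk)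
    have hkey : 2 * (lam * κ * (b ^ (i + k))⁻¹) < κ * (b ^ i)⁻¹ / C := by
      have e1 : 2 * (lam * κ * (b ^ (i + k))⁻¹)
          = (2 * lam * (b ^ k)⁻¹) * (κ * (b ^ i)⁻¹) := by
        rw [pow_add, mul_inv]; ring
      have e2 : κ * (b ^ i)⁻¹ / C = C⁻¹ * (κ * (b ^ i)⁻¹) := by ring
      rw [e1, e2]
      apply mul_lt_mul_of_pos_right _ hr
      rw [← div_eq_mul_inv, inv_eq_one_div, div_lt_div_iff₀ hbk hC0]
      linarith
    linarith
  refine ⟨⟨k₀, hempty⟩, ?_, ?_⟩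
  · intro p hp
    have hM : ∀ k, k₀ ≤ k → Mpk centers Adj κ b p k 2 = 0 := by
      intro k hk
      apply le_antisymm _ zero_le
      apply iSup_le; intro i; apply iSup_le; intro x; apply iSup_le; intro hx
      rw [hempty k hk i x hx]
      apply sInf_le
      refine ⟨fun _ => 0, by simp, ?_⟩
      simp [ENNReal.zero_rpow_of_pos hp]
    have hev : (fun k => Mpk centers Adj κ b p k 2) =ᶠ[Filter.atTop] fun _ => (0:ℝ≥0∞) :=
      Filter.eventually_atTop.mpr ⟨k₀, hM⟩
    rw [Filter.liminf_congr hev, Filter.liminf_const]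
  · have hset : {p : ℝ | 0 < p ∧
        Filter.liminf (fun k => Mpk centers Adj κ b p k 2) Filter.atTop = 0} = Set.Ioi 0 := by
      ext p
      constructor
      · exact fun h => h.1
      · intro hp
        refine ⟨hp, ?_⟩
        have hM : ∀ k, k₀ ≤ k → Mpk centers Adj κ b p k 2 = 0 := by
          intro k hk
          apply le_antisymm _ zero_le
          apply iSup_le; intro i; apply iSup_le; intro x; apply iSup_le; intro hx
          rw [hempty k hk i x hx]
          apply sInf_le
          refine ⟨fun _ => 0, by simp, ?_⟩
          simp [ENNReal.zero_rpow_of_pos hp]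
        have hev : (fun k => Mpk centers Adj κ b p k 2) =ᶠ[Filter.atTop] fun _ => (0:ℝ≥0∞) :=
          Filter.eventually_atTop.mpr ⟨k₀, hM⟩
        rw [Filter.liminf_congr hev, Filter.liminf_const]
    rw [hset, csInf_Ioi]
end

section
/- Let (X,d) be compact and let θ be an Ahlfors regular distance of dimension q on X with id:(X,d)→(X,θ) η-quasisymmetric, with q-regular measure μ. Then there is a constant K ≥ 1, depending only on q, η and the regularity constant of μ, such that K⁻¹·(diam_θ B(x,r))^q ≤ μ(B(x,r)) ≤ K·(diam_θ B(x,r))^q for every d-ball B(x,r) with 0 < r ≤ diam X, where diam_θ denotes diameter in the metric θ. -/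
/-- Let `(X,d)` be compact and uniformly perfect, let `θ` be an Ahlfors
regular distance of dimension `q` on `X` (with `q`-regular measure `μ`) such that the
identity `(X,d) → (X,θ)` is `η`-quasisymmetric. Then there is `K ≥ 1`, depending only
on `q`, `η` and the regularity constant of `μ`, such that
`K⁻¹·(diam_θ B(x,r))^q ≤ μ(B(x,r)) ≤ K·(diam_θ B(x,r))^q`
for every `d`-ball `B(x,r)` with `0 < r ≤ diam X`. -/
theorem stmt_19 {X : Type*} [MetricSpace X] [CompactSpace X]
    [MeasurableSpace X] [BorelSpace X]
    (θ : X → X → ℝ)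
    (hθ0 : ∀ x y, θ x y = 0 ↔ x = y) (hθs : ∀ x y, θ x y = θ y x)
    (hθt : ∀ x y z, θ x z ≤ θ x y + θ y z)
    (η : ℝ → ℝ) (hη : StrictMonoOn η (Set.Ici 0))
    (hqs : ∀ x y z : X, y ≠ z → θ x z / θ y z ≤ η (dist x z / dist y z))
    (KP : ℝ) (hKP : 1 < KP)
    (hup : ∀ (x : X) (r : ℝ), 0 < r → r ≤ Metric.diam (Set.univ : Set X) →
      (Metric.ball x r \ Metric.ball x (r / KP)).Nonempty)
    (μ : MeasureTheory.Measure X) (q : ℝ) (hq : 0 < q)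
    (K₀ : ℝ) (hK₀ : 1 ≤ K₀)
    (hreg : ∀ (x : X) (s : ℝ), 0 < s → s ≤ sSup {t : ℝ | ∃ a b : X, t = θ a b} →
      ENNReal.ofReal (K₀⁻¹ * s ^ q) ≤ μ {y | θ x y < s} ∧
        μ {y | θ x y < s} ≤ ENNReal.ofReal (K₀ * s ^ q)) :
    ∃ K : ℝ, 1 ≤ K ∧ ∀ (x : X) (r : ℝ), 0 < r →
      r ≤ Metric.diam (Set.univ : Set X) →
      ENNReal.ofReal (K⁻¹ *
          (sSup {t : ℝ | ∃ a ∈ Metric.ball x r, ∃ b ∈ Metric.ball x r, t = θ a b}) ^ q)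
        ≤ μ (Metric.ball x r) ∧
      μ (Metric.ball x r) ≤ ENNReal.ofReal (K *
          (sSup {t : ℝ | ∃ a ∈ Metric.ball x r, ∃ b ∈ Metric.ball x r, t = θ a b}) ^ q) := by
  classical
  rcases le_or_gt (Metric.diam (Set.univ : Set X)) 0 with hΔ | hΔ
  · exact ⟨1, le_rfl, fun x r hr hr' => absurd (hr'.trans hΔ) (not_le.mpr hr)⟩
  set Δ := Metric.diam (Set.univ : Set X) with hΔdef
  -- basic facts about θ
  have θself : ∀ x : X, θ x x = 0 := fun x => (hθ0 x x).mpr rfl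
  have θnn : ∀ a b : X, 0 ≤ θ a b := by
    intro a b
    have h := hθt a b a
    rw [θself, hθs b a] at h
    linarith
  have θpos : ∀ a b : X, a ≠ b → 0 < θ a b := fun a b hab =>
    lt_of_le_of_ne (θnn a b) (fun h => hab ((hθ0 a b).mp h.symm))
  have hKPpos : (0:ℝ) < KP := zero_lt_one.trans hKP
  -- two distinct points
  obtain ⟨p₀, q₀, hp₀q₀⟩ : ∃ p q : X, 0 < dist p q := by
    by_contra h
    push_neg at h
    have : Δ ≤ 0 :=
      Metric.diam_le_of_forall_dist_le le_rfl (fun a _ b _ => h a b)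
    linarith
  have hp₀q₀' : p₀ ≠ q₀ := dist_pos.mp hp₀q₀
  -- facts about η
  have hη0 : 0 ≤ η 0 := by
    have h := hqs p₀ q₀ p₀ (fun hc => hp₀q₀' hc.symm)
    simpa [θself, dist_self] using h
  have hηmono : MonotoneOn η (Set.Ici 0) := hη.monotoneOn
  have hη1 : (1:ℝ) ≤ η 1 := by
    have h := hqs p₀ p₀ q₀ hp₀q₀'
    rwa [div_self (ne_of_gt (θpos p₀ q₀ hp₀q₀')), div_self (ne_of_gt hp₀q₀)] at h
  have hηpos : ∀ t : ℝ, 0 < t → 0 < η t := fun t ht =>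
    lt_of_le_of_lt hη0 (hη (Set.mem_Ici.mpr le_rfl) (Set.mem_Ici.mpr ht.le) ht)
  have hqs' : ∀ x y z : X, y ≠ z → θ x z ≤ η (dist x z / dist y z) * θ y z := by
    intro x y z hyz
    exact (div_le_iff₀ (θpos y z hyz)).mp (hqs x y z hyz)
  -- a second reference point via uniform perfectness
  obtain ⟨p₁, hp₁⟩ := hup p₀ Δ hΔ le_rfl
  have hp₁ball : dist p₁ p₀ < Δ := by
    have := hp₁.1; rwa [Metric.mem_ball] at this
  have hp₁far : Δ / KP ≤ dist p₁ p₀ := by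
    by_contra h
    push_neg at h
    exact hp₁.2 (Metric.mem_ball.mpr h)
  have hp₁p₀ : p₁ ≠ p₀ := dist_pos.mp (lt_of_lt_of_le (div_pos hΔ hKPpos) hp₁far)
  have hdle : ∀ a b : X, dist a b ≤ Δ := fun a b =>
    Metric.dist_le_diam_of_mem isCompact_univ.isBounded (Set.mem_univ a) (Set.mem_univ b)
  set L := θ p₀ p₁ with hLdef
  have hLpos : 0 < L := θpos _ _ (fun h => hp₁p₀ h.symm)
  -- a uniform bound on θ
  have hTmax : ∀ a b : X, θ a b ≤ η (2*KP) * (η KP * L) := by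
    intro a b
    have h2KPpos : 0 < Δ/(2*KP) := div_pos hΔ (by positivity)
    have hcase : Δ/(2*KP) ≤ dist p₀ b ∨ Δ/(2*KP) ≤ dist p₁ b := by
      by_contra h
      push_neg at h
      have htri : dist p₁ p₀ ≤ dist p₁ b + dist b p₀ := dist_triangle p₁ b p₀
      have h1 : dist b p₀ < Δ/(2*KP) := by rw [dist_comm]; exact h.1
      have h2 : dist p₁ b < Δ/(2*KP) := h.2
      have : dist p₁ p₀ < Δ/KP := by
        have hsum : dist p₁ p₀ < Δ/(2*KP) + Δ/(2*KP) := by linarith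
        have : Δ/(2*KP) + Δ/(2*KP) = Δ/KP := by field_simp; ring
        linarith
      linarith
    have key : ∀ p p' : X, Δ/(2*KP) ≤ dist p b → Δ/KP ≤ dist p' p → θ p' p = L →
        θ a b ≤ η (2*KP) * (η KP * L) := by
      intro p p' hpb hp'p hLp
      have hpb0 : 0 < dist p b := lt_of_lt_of_le h2KPpos hpb
      have hpbne : p ≠ b := dist_pos.mp hpb0
      have h1 : θ a b ≤ η (dist a b / dist p b) * θ p b := hqs' a p b hpbne
      have hr1 : dist a b / dist p b ≤ 2*KP := by
        rw [div_le_iff₀ hpb0]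
        calc dist a b ≤ Δ := hdle a b
          _ = (2*KP) * (Δ/(2*KP)) := by field_simp
          _ ≤ (2*KP) * dist p b := by
              exact mul_le_mul_of_nonneg_left hpb (by positivity)
      have h1' : θ a b ≤ η (2*KP) * θ p b :=
        h1.trans (mul_le_mul_of_nonneg_right
          (hηmono (Set.mem_Ici.mpr (div_nonneg dist_nonneg dist_nonneg))
            (Set.mem_Ici.mpr (by positivity)) hr1) (θnn p b))
      have hp'p0 : 0 < dist p' p := lt_of_lt_of_le (div_pos hΔ hKPpos) hp'p
      have h2 : θ b p ≤ η (dist b p / dist p' p) * θ p' p := hqs' b p' p (dist_pos.mp hp'p0)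
      have hr2 : dist b p / dist p' p ≤ KP := by
        rw [div_le_iff₀ hp'p0]
        calc dist b p ≤ Δ := hdle b p
          _ = KP * (Δ/KP) := by field_simp
          _ ≤ KP * dist p' p := mul_le_mul_of_nonneg_left hp'p hKPpos.le
      have h2' : θ p b ≤ η KP * L := by
        rw [hθs p b]
        calc θ b p ≤ η (dist b p / dist p' p) * θ p' p := h2
          _ ≤ η KP * θ p' p := mul_le_mul_of_nonneg_right
              (hηmono (Set.mem_Ici.mpr (div_nonneg dist_nonneg dist_nonneg))
                (Set.mem_Ici.mpr hKPpos.le) hr2) (θnn p' p)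
          _ = η KP * L := by rw [hLp]
      have hη2KP : 0 ≤ η (2*KP) := (hηpos _ (by positivity)).le
      calc θ a b ≤ η (2*KP) * θ p b := h1'
        _ ≤ η (2*KP) * (η KP * L) := mul_le_mul_of_nonneg_left h2' hη2KP
    rcases hcase with h | h
    · exact key p₀ p₁ h hp₁far (hθs p₁ p₀ ▸ rfl)
    · refine key p₁ p₀ h (by rwa [dist_comm]) rfl
  have hTbdd : BddAbove {t : ℝ | ∃ a b : X, t = θ a b} :=
    ⟨η (2*KP) * (η KP * L), by rintro t ⟨a, b, rfl⟩; exact hTmax a b⟩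
  have hDθge : ∀ a b : X, θ a b ≤ sSup {t : ℝ | ∃ a b : X, t = θ a b} :=
    fun a b => le_csSup hTbdd ⟨a, b, rfl⟩
  set Dθ := sSup {t : ℝ | ∃ a b : X, t = θ a b} with hDθdef
  have hDθpos : 0 < Dθ := lt_of_lt_of_le hLpos (hDθge p₀ p₁)
  have hK₀pos : (0:ℝ) < K₀ := lt_of_lt_of_le one_pos hK₀
  -- no θ-isolated points
  have hNI : ∀ (x : X) (s : ℝ), 0 < s → s ≤ Dθ → ∃ y : X, y ≠ x ∧ θ x y < s := by
    intro x s hs hsD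
    by_contra hcon
    push_neg at hcon
    set c := (K₀⁻¹ * K₀⁻¹) ^ (1/q) with hcdef
    have hcpos : 0 < c := Real.rpow_pos_of_pos (by positivity) _
    have hcle : c ≤ 1 := by
      apply Real.rpow_le_one (by positivity) ?_ (by positivity)
      have h1 : K₀⁻¹ ≤ 1 := by
        rw [inv_le_one_iff₀]; right; exact hK₀
      nlinarith [inv_pos.mpr hK₀pos]
    set s' := c * s / 2 with hs'def
    have hs'pos : 0 < s' := by positivity
    have hs'lt : s' < c * s := by
      rw [hs'def]
      exact half_lt_self (by positivity)
    have hcs : c * s ≤ s := mul_le_of_le_one_left hs.le hcle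
    have hs'le : s' ≤ Dθ := le_trans (le_trans hs'lt.le hcs) hsD
    have hsub : {y : X | θ x y < s} ⊆ {x} := by
      intro y hy
      simp only [Set.mem_setOf_eq] at hy
      simp only [Set.mem_singleton_iff]
      by_contra hyx
      exact absurd hy (not_lt.mpr (hcon y hyx))
    have hsub2 : ({x} : Set X) ⊆ {y : X | θ x y < s'} := by
      intro y hy
      simp only [Set.mem_singleton_iff] at hy
      subst hy
      simpa [θself] using hs'pos
    have hchain : ENNReal.ofReal (K₀⁻¹ * s ^ q) ≤ ENNReal.ofReal (K₀ * s' ^ q) :=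
      le_trans (hreg x s hs hsD).1
        (le_trans (MeasureTheory.measure_mono hsub)
          (le_trans (MeasureTheory.measure_mono hsub2) (hreg x s' hs'pos hs'le).2))
    have hreal : K₀⁻¹ * s ^ q ≤ K₀ * s' ^ q :=
      (ENNReal.ofReal_le_ofReal_iff (by positivity)).mp hchain
    have hcq : c ^ q = K₀⁻¹ * K₀⁻¹ := by
      rw [hcdef, ← Real.rpow_mul (by positivity), one_div_mul_cancel (ne_of_gt hq),
        Real.rpow_one]
    have hlt : s' ^ q < c ^ q * s ^ q := by
      have h := Real.rpow_lt_rpow hs'pos.le hs'lt hq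
      rwa [Real.mul_rpow hcpos.le hs.le] at h
    have hfin : K₀ * s' ^ q < K₀⁻¹ * s ^ q := by
      have h1 : K₀ * s' ^ q < K₀ * (c ^ q * s ^ q) := by
        exact mul_lt_mul_of_pos_left hlt hK₀pos
      have h2 : K₀ * (c ^ q * s ^ q) = K₀⁻¹ * s ^ q := by
        rw [hcq, show K₀ * (K₀⁻¹ * K₀⁻¹ * s ^ q) = (K₀ * K₀⁻¹) * (K₀⁻¹ * s ^ q) from by ring,
          mul_inv_cancel₀ (ne_of_gt hK₀pos), one_mul]
      linarith
    linarith
  -- bound μ(X)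
  have hE1pos : (0:ℝ) < η 1 := lt_of_lt_of_le one_pos hη1
  have cov : ∀ x : X, ∃ δ : ℝ, 0 < δ ∧ ∀ z : X, dist z x < δ → θ x z < Dθ/2 := by
    intro x
    have hb : Dθ/(2*η 1) ≤ Dθ := by
      rw [div_le_iff₀ (by positivity)]
      nlinarith [hDθpos]
    obtain ⟨y, hyx, hy⟩ := hNI x (Dθ/(2*η 1)) (by positivity) hb
    refine ⟨dist y x, dist_pos.mpr hyx, ?_⟩
    intro z hz
    rcases eq_or_ne z x with rfl | hzx
    · rw [hθs, θself]; positivity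
    have h := hqs' z y x hyx
    have hr1 : dist z x / dist y x ≤ 1 := (div_le_one (dist_pos.mpr hyx)).mpr hz.le
    have h' : θ z x ≤ η 1 * θ y x :=
      h.trans (mul_le_mul_of_nonneg_right
        (hηmono (Set.mem_Ici.mpr (div_nonneg dist_nonneg dist_nonneg))
          (Set.mem_Ici.mpr zero_le_one) hr1) (θnn y x))
    have hyx' : θ y x < Dθ/(2*η 1) := by rw [hθs y x]; exact hy
    rw [hθs x z]
    calc θ z x ≤ η 1 * θ y x := h'
      _ < η 1 * (Dθ/(2*η 1)) := mul_lt_mul_of_pos_left hyx' hE1pos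
      _ = Dθ/2 := by field_simp
  choose δ hδpos hδ using cov
  obtain ⟨F, hF⟩ := isCompact_univ.elim_finite_subcover
    (fun x : X => Metric.ball x (δ x)) (fun x => Metric.isOpen_ball)
    (by intro z _; exact Set.mem_iUnion.mpr ⟨z, Metric.mem_ball_self (hδpos z)⟩)
  set M : ℝ := (F.card : ℝ) * (K₀ * (Dθ/2) ^ q) with hMdef
  have hMnn : 0 ≤ M := by positivity
  have hμX : μ Set.univ ≤ ENNReal.ofReal M := by
    calc μ Set.univ ≤ μ (⋃ x ∈ F, Metric.ball x (δ x)) := MeasureTheory.measure_mono hF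
      _ ≤ ∑ x ∈ F, μ (Metric.ball x (δ x)) := MeasureTheory.measure_biUnion_finset_le F _
      _ ≤ ∑ x ∈ F, ENNReal.ofReal (K₀ * (Dθ/2) ^ q) := by
          refine Finset.sum_le_sum (fun x _ => ?_)
          refine le_trans (MeasureTheory.measure_mono ?_)
            ((hreg x (Dθ/2) (by positivity) (half_le_self hDθpos.le)).2)
          intro z hz
          rw [Metric.mem_ball] at hz
          exact hδ x z hz
      _ = F.card • ENNReal.ofReal (K₀ * (Dθ/2) ^ q) := Finset.sum_const _
      _ = ENNReal.ofReal M := by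
          rw [nsmul_eq_mul, hMdef, ← ENNReal.ofReal_natCast F.card,
            ← ENNReal.ofReal_mul (by positivity)]
  -- the constant
  set E1 := η 1 with hE1def
  set EK := η KP with hEKdef
  have hEKpos : 0 < EK := hηpos KP hKPpos
  have hEK1 : 1 ≤ EK := le_trans hη1
    (hηmono (Set.mem_Ici.mpr zero_le_one) (Set.mem_Ici.mpr hKPpos.le) hKP.le)
  set K := max 1 (max (K₀ * (2*EK*E1) ^ q) (max (K₀ * (2*EK) ^ q) (M * (2*EK/Dθ) ^ q)))
    with hKdef
  have hKpos : (0:ℝ) < K := lt_of_lt_of_le one_pos (le_max_left _ _)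
  refine ⟨K, le_max_left _ _, ?_⟩
  intro x r hr hrΔ
  obtain ⟨w, hw⟩ := hup x r hr hrΔ
  have hwball : dist w x < r := by have := hw.1; rwa [Metric.mem_ball] at this
  have hwfar : r / KP ≤ dist w x := by
    by_contra h
    push_neg at h
    exact hw.2 (Metric.mem_ball.mpr h)
  have hwx0 : 0 < dist w x := lt_of_lt_of_le (div_pos hr hKPpos) hwfar
  have hwx : w ≠ x := dist_pos.mp hwx0
  set tw := θ x w with htwdef
  have htwpos : 0 < tw := θpos x w (Ne.symm hwx)
  have htwx : θ w x = tw := hθs w x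
  have hC1 : ∀ a : X, dist a x < r → θ a x ≤ EK * tw := by
    intro a ha
    have h := hqs' a w x hwx
    have hr1 : dist a x / dist w x ≤ KP := by
      rw [div_le_iff₀ hwx0]
      calc dist a x ≤ r := ha.le
        _ = KP * (r/KP) := by field_simp
        _ ≤ KP * dist w x := mul_le_mul_of_nonneg_left hwfar hKPpos.le
    calc θ a x ≤ η (dist a x / dist w x) * θ w x := h
      _ ≤ EK * θ w x := mul_le_mul_of_nonneg_right
          (hηmono (Set.mem_Ici.mpr (div_nonneg dist_nonneg dist_nonneg))
            (Set.mem_Ici.mpr hKPpos.le) hr1) (θnn w x)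
      _ = EK * tw := by rw [htwx]
  set D := sSup {t : ℝ | ∃ a ∈ Metric.ball x r, ∃ b ∈ Metric.ball x r, t = θ a b} with hDdef
  have hTbBdd : BddAbove {t : ℝ | ∃ a ∈ Metric.ball x r, ∃ b ∈ Metric.ball x r, t = θ a b} := by
    refine ⟨η (2*KP) * (η KP * L), ?_⟩
    rintro s ⟨a, _, b, _, rfl⟩
    exact hTmax a b
  have htD : tw ≤ D :=
    le_csSup hTbBdd ⟨x, Metric.mem_ball_self hr, w, Metric.mem_ball.mpr hwball, rfl⟩
  have hDpos : 0 < D := lt_of_lt_of_le htwpos htD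
  have hDle : D ≤ 2*EK*tw := by
    refine csSup_le ⟨0, x, Metric.mem_ball_self hr, x, Metric.mem_ball_self hr, (θself x).symm⟩ ?_
    rintro s ⟨a, ha, b, hb, rfl⟩
    rw [Metric.mem_ball] at ha hb
    have h1 := hC1 a ha
    have h2 : θ x b ≤ EK * tw := by rw [hθs x b]; exact hC1 b hb
    have h3 := hθt a x b
    linarith
  have htDθ : tw ≤ Dθ := hDθge x w
  constructor
  · -- lower bound
    set s₀ := tw / E1 with hs₀def
    have hs₀pos : 0 < s₀ := div_pos htwpos hE1pos
    have hs₀le : s₀ ≤ Dθ := le_trans (div_le_self htwpos.le hη1) htDθ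
    have hincl : {y : X | θ x y < s₀} ⊆ Metric.ball x r := by
      intro y hy
      simp only [Set.mem_setOf_eq] at hy
      rw [Metric.mem_ball]
      by_contra hcon
      push_neg at hcon
      have hyx0 : 0 < dist y x := lt_of_lt_of_le hr hcon
      have hyx : y ≠ x := dist_pos.mp hyx0
      have h := hqs' w y x hyx
      have hr1 : dist w x / dist y x ≤ 1 :=
        (div_le_one hyx0).mpr (le_trans hwball.le hcon)
      have h' : θ w x ≤ E1 * θ y x :=
        h.trans (mul_le_mul_of_nonneg_right
          (hηmono (Set.mem_Ici.mpr (div_nonneg dist_nonneg dist_nonneg))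
            (Set.mem_Ici.mpr zero_le_one) hr1) (θnn y x))
      rw [htwx] at h'
      have hge : s₀ ≤ θ x y := by
        rw [hs₀def, div_le_iff₀ hE1pos, hθs x y, mul_comm]
        exact h'
      exact absurd hy (not_lt.mpr hge)
    refine le_trans ?_ (le_trans (hreg x s₀ hs₀pos hs₀le).1 (MeasureTheory.measure_mono hincl))
    apply ENNReal.ofReal_le_ofReal
    have hKc : K₀ * (2*EK*E1) ^ q ≤ K := le_trans (le_max_left _ _) (le_max_right _ _)
    have hcpos : (0:ℝ) < 2*EK*E1 := by positivity
    have hs₀ge : D / (2*EK*E1) ≤ s₀ := by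
      rw [hs₀def, div_le_div_iff₀ hcpos hE1pos]
      calc D * E1 ≤ (2*EK*tw) * E1 := mul_le_mul_of_nonneg_right hDle hE1pos.le
        _ = tw * (2*EK*E1) := by ring
    have h1 : (D / (2*EK*E1)) ^ q ≤ s₀ ^ q := Real.rpow_le_rpow (by positivity) hs₀ge hq.le
    rw [Real.div_rpow hDpos.le hcpos.le] at h1
    have hK₀c : (0:ℝ) < K₀ * (2*EK*E1) ^ q := by positivity
    have hinv : K⁻¹ ≤ (K₀ * (2*EK*E1) ^ q)⁻¹ := by
      apply inv_anti₀ hK₀c hKc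
    calc K⁻¹ * D ^ q ≤ (K₀ * (2*EK*E1) ^ q)⁻¹ * D ^ q :=
          mul_le_mul_of_nonneg_right hinv (by positivity)
      _ = K₀⁻¹ * (D ^ q / (2*EK*E1) ^ q) := by rw [mul_inv]; ring
      _ ≤ K₀⁻¹ * s₀ ^ q := mul_le_mul_of_nonneg_left h1 (by positivity)
  · -- upper bound
    rcases le_or_gt (2*EK*tw) Dθ with hcase | hcase
    · have hincl2 : Metric.ball x r ⊆ {y : X | θ x y < 2*EK*tw} := by
        intro y hy
        rw [Metric.mem_ball] at hy
        have h := hC1 y hy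
        simp only [Set.mem_setOf_eq]
        rw [hθs x y]
        have hp := mul_pos hEKpos htwpos
        linarith
      refine le_trans (MeasureTheory.measure_mono hincl2)
        (le_trans (hreg x (2*EK*tw) (by positivity) hcase).2 (ENNReal.ofReal_le_ofReal ?_))
      have hKc : K₀ * (2*EK) ^ q ≤ K :=
        le_trans (le_trans (le_max_left _ _) (le_max_right _ _)) (le_max_right _ _)
      have h1 : (2*EK*tw) ^ q = (2*EK) ^ q * tw ^ q := Real.mul_rpow (by positivity) htwpos.le
      have h2 : tw ^ q ≤ D ^ q := Real.rpow_le_rpow htwpos.le htD hq.le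
      calc K₀ * (2*EK*tw) ^ q = K₀ * (2*EK) ^ q * tw ^ q := by rw [h1]; ring
        _ ≤ K₀ * (2*EK) ^ q * D ^ q := mul_le_mul_of_nonneg_left h2 (by positivity)
        _ ≤ K * D ^ q := mul_le_mul_of_nonneg_right hKc (by positivity)
    · have hKc : M * (2*EK/Dθ) ^ q ≤ K :=
        le_trans (le_trans (le_max_right _ _) (le_max_right _ _)) (le_max_right _ _)
      refine le_trans (MeasureTheory.measure_mono (Set.subset_univ _))
        (le_trans hμX (ENNReal.ofReal_le_ofReal ?_))
      have hDgt : Dθ/(2*EK) < tw := by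
        rw [div_lt_iff₀ (by positivity)]
        linarith
      have hD2 : Dθ/(2*EK) ≤ D := le_trans hDgt.le htD
      have h1 : (Dθ/(2*EK)) ^ q ≤ D ^ q := Real.rpow_le_rpow (by positivity) hD2 hq.le
      have hrec : (2*EK/Dθ) ^ q * (Dθ/(2*EK)) ^ q = 1 := by
        rw [← Real.mul_rpow (by positivity) (by positivity),
          show (2*EK/Dθ) * (Dθ/(2*EK)) = 1 by field_simp, Real.one_rpow]
      calc M = M * ((2*EK/Dθ) ^ q * (Dθ/(2*EK)) ^ q) := by rw [hrec, mul_one]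
        _ = (M * (2*EK/Dθ) ^ q) * (Dθ/(2*EK)) ^ q := by ring
        _ ≤ (M * (2*EK/Dθ) ^ q) * D ^ q := by
            refine mul_le_mul_of_nonneg_left h1
              (mul_nonneg hMnn (Real.rpow_nonneg (div_nonneg ?_ hDθpos.le) q))
            exact mul_nonneg (by norm_num) hEKpos.le
        _ ≤ K * D ^ q := mul_le_mul_of_nonneg_right hKc (Real.rpow_nonneg hDpos.le q)
end
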